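/- Let p be an odd prime, n an integer with gcd(n,p)=1, and k ≥ 1. If (a,0) is a target for n modulus p^k, then the number of targets (a',b') for n modulus p^{k+1} with a' ≡ a (mod p^k) and b' ≡ 0 (mod p^k) equals (p+1)/2 if k is even, and equals 1 if k is odd. -/

import Mathlib

/-- `(a,b)` is a target for `n` modulus `c`: `a` and `b` are squares in `ℤ/cℤ`
(zero allowed) and `n + a = b` in `ℤ/cℤ`. -/
def IsTarget (n : ℤ) (c : ℕ) (a b : ZMod c) : Prop :=
  IsSquare a ∧ IsSquare b ∧ (n : ZMod c) + a = b

/-- `τ(n,c)`, the number of targets for `n` modulus `c`. -/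
noncomputable def tau (n : ℤ) (c : ℕ) : ℕ :=
  ({ab : ZMod c × ZMod c | IsTarget n c ab.1 ab.2}).ncard


lemma hensel_sq (p : ℕ) [hp : Fact p.Prime] (hodd : p ≠ 2) (u : ℤ) (hu : ¬ (p:ℤ) ∣ u)
    (h1 : ∃ x : ℤ, (p:ℤ) ∣ x*x - u) (m : ℕ) :
    ∃ x : ℤ, ((p:ℤ))^(m+1) ∣ x*x - u := by
  induction m with
  | zero => simpa using h1
  | succ m ih =>
    obtain ⟨x, hx⟩ := ih
    have hpx : ¬ (p:ℤ) ∣ x := by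
      intro hdx
      apply hu
      have h1 : (p:ℤ) ∣ x*x - u := dvd_trans (dvd_pow_self _ (Nat.succ_ne_zero m)) hx
      have h2 : (p:ℤ) ∣ x*x := Dvd.dvd.mul_right hdx x
      exact (dvd_sub_right h2).mp h1
    obtain ⟨d, hd⟩ := hx
    have hprime : Prime (p:ℤ) := Nat.prime_iff_prime_int.mp hp.out
    have hw : ((2*x : ℤ) : ZMod p) ≠ 0 := by
      rw [Ne, ZMod.intCast_zmod_eq_zero_iff_dvd]
      intro hdvd
      rcases hprime.dvd_mul.mp hdvd with h | h
      · have : (p:ℤ) ∣ 2 := h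
        have h2 : p ∣ 2 := by exact_mod_cast this
        have h3 := hp.out.two_le
        have : p = 2 := le_antisymm (Nat.le_of_dvd two_pos h2) h3
        exact hodd this
      · exact hpx h
    set w : ZMod p := ((2*x : ℤ) : ZMod p) with hwdef
    set e : ZMod p := w⁻¹ * (-((d : ℤ) : ZMod p)) with hedef
    set c : ℤ := (e.val : ℤ) with hcdef
    have hce : ((c : ℤ) : ZMod p) = e := by
      simp [hcdef, ZMod.natCast_val, ZMod.cast_id]
    have hc : (p:ℤ) ∣ 2*x*c + d := by
      rw [← ZMod.intCast_zmod_eq_zero_iff_dvd]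
      push_cast
      rw [show ((2:ZMod p)*(x:ZMod p)*(c:ZMod p)) = w * (c:ZMod p) by rw [hwdef]; push_cast; ring]
      rw [hce, hedef, ← mul_assoc, mul_inv_cancel₀ hw]
      ring
    refine ⟨x + c * (p:ℤ)^(m+1), ?_⟩
    have key : (x + c * (p:ℤ)^(m+1)) * (x + c * (p:ℤ)^(m+1)) - u
        = (p:ℤ)^(m+1) * (2*x*c + d) + (c*c) * ((p:ℤ)^(m+1))^2 := by
      rw [show (x + c * (p:ℤ)^(m+1)) * (x + c * (p:ℤ)^(m+1)) - u
        = (x*x - u) + 2*x*c*(p:ℤ)^(m+1) + c*c*((p:ℤ)^(m+1))^2 by ring, hd]; ring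
    rw [key]
    apply dvd_add
    · rw [pow_succ]
      exact mul_dvd_mul_left _ hc
    · exact Dvd.dvd.mul_left (by
        rw [← pow_mul]
        exact pow_dvd_pow _ (by omega)) _


lemma isSquare_unit_iff (p : ℕ) [hp : Fact p.Prime] (hodd : p ≠ 2) (m : ℕ)
    (u : ZMod (p^(m+1))) (hu : IsUnit u) :
    IsSquare u ↔ IsSquare (ZMod.castHom (dvd_pow_self p (Nat.succ_ne_zero m)) (ZMod p) u) := by
  constructor
  · intro h; exact h.map _
  · intro h
    have hne : NeZero (p^(m+1)) := ⟨pow_ne_zero _ hp.out.ne_zero⟩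
    have hcop : Nat.Coprime u.val (p^(m+1)) := ZMod.val_coe_unit_coprime hu.unit
    have hpu : ¬ (p:ℤ) ∣ (u.val : ℤ) := by
      rw [Int.natCast_dvd_natCast]
      intro hdvd
      have hg : p ∣ Nat.gcd u.val (p^(m+1)) := Nat.dvd_gcd hdvd (dvd_pow_self p (Nat.succ_ne_zero m))
      rw [Nat.Coprime] at hcop
      rw [hcop] at hg
      have := Nat.le_of_dvd one_pos hg; have := hp.out.two_le; omega
    have hcast : (ZMod.castHom (dvd_pow_self p (Nat.succ_ne_zero m)) (ZMod p) u)
        = ((u.val : ℕ) : ZMod p) := by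
      rw [ZMod.castHom_apply, ← ZMod.natCast_val]
    obtain ⟨r, hr⟩ := h
    have h1 : ∃ x : ℤ, (p:ℤ) ∣ x*x - (u.val : ℤ) := by
      refine ⟨(r.val : ℤ), ?_⟩
      rw [← ZMod.intCast_zmod_eq_zero_iff_dvd]
      push_cast
      rw [ZMod.natCast_val, ZMod.natCast_val, ZMod.cast_id]
      rw [ZMod.castHom_apply] at hr
      rw [hr]
      ring
    obtain ⟨x, hx⟩ := hensel_sq p hodd (u.val : ℤ) hpu h1 m
    refine ⟨(x : ZMod (p^(m+1))), ?_⟩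
    have : ((x*x - (u.val:ℤ) : ℤ) : ZMod (p^(m+1))) = 0 := by
      rw [ZMod.intCast_zmod_eq_zero_iff_dvd]
      exact_mod_cast hx
    push_cast at this
    rw [ZMod.natCast_val, ZMod.cast_id] at this
    linear_combination -this


open Finset in
lemma card_squares (p : ℕ) [hp : Fact p.Prime] (hodd : p ≠ 2) :
    ({t : ZMod p | IsSquare t}).ncard = (p+1)/2 := by
  classical
  have hchar : ringChar (ZMod p) ≠ 2 := by
    rw [ZMod.ringChar_zmod_n]; exact hodd
  have hset : {t : ZMod p | IsSquare t} = ↑(univ.filter (fun t : ZMod p => IsSquare t)) := by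
    ext t; simp
  rw [hset, Set.ncard_coe_finset]
  have himg : univ.filter (fun t : ZMod p => IsSquare t) = univ.image (fun x : ZMod p => x^2) := by
    ext a
    simp only [mem_filter, mem_univ, true_and, mem_image]
    constructor
    · rintro ⟨r, rfl⟩; exact ⟨r, by ring⟩
    · rintro ⟨x, rfl⟩; exact ⟨x, by ring⟩
  rw [himg]
  have hcard := Finset.card_eq_sum_card_image (fun x : ZMod p => x^2) (univ : Finset (ZMod p))
  rw [Finset.card_univ, ZMod.card p] at hcard
  set I := univ.image (fun x : ZMod p => x^2) with hI
  have h0 : (0 : ZMod p) ∈ I := mem_image.mpr ⟨0, mem_univ _, by ring⟩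
  have hfib : ∀ a ∈ I, (univ.filter (fun x : ZMod p => x^2 = a)).card = if a = 0 then 1 else 2 := by
    intro a ha
    have hq := quadraticChar_card_sqrts hchar a
    have hto : ({x : ZMod p | x ^ 2 = a}.toFinset) = univ.filter (fun x : ZMod p => x^2 = a) := by
      ext x; simp
    rw [hto] at hq
    by_cases h : a = 0
    · subst h
      simp only [if_pos rfl]
      have : quadraticChar (ZMod p) 0 = 0 := by simp
      rw [this] at hq
      exact_mod_cast hq
    · obtain ⟨x, _, rfl⟩ := mem_image.mp ha
      have hx : x ≠ 0 := by rintro rfl; simp at h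
      have : quadraticChar (ZMod p) (x^2) = 1 :=
        (quadraticChar_one_iff_isSquare h).mpr ⟨x, by ring⟩
      rw [this] at hq
      rw [if_neg h]
      exact_mod_cast hq
  have hsum : ∑ a ∈ I, (univ.filter (fun x : ZMod p => x^2 = a)).card
      = ∑ a ∈ I, (if a = 0 then 1 else 2) := Finset.sum_congr rfl hfib
  rw [hsum] at hcard
  rw [← Finset.add_sum_erase _ _ h0] at hcard
  rw [if_pos (rfl : (0:ZMod p) = 0)] at hcard
  have h2 : ∑ a ∈ I.erase 0, (if a = 0 then 1 else 2) = 2 * (I.card - 1) := by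
    rw [Finset.sum_congr rfl (fun a ha => if_neg (Finset.ne_of_mem_erase ha))]
    rw [Finset.sum_const, smul_eq_mul, Finset.card_erase_of_mem h0, Nat.mul_comm]
  rw [h2] at hcard
  have hpos : 1 ≤ I.card := Finset.card_pos.mpr ⟨0, h0⟩
  omega


lemma isSquare_val_mul_pow_iff (p : ℕ) [hp : Fact p.Prime] (k : ℕ) (t : ZMod p) (ht : t ≠ 0) :
    IsSquare ((↑(t.val * p^k) : ZMod (p^(k+1)))) ↔ (Even k ∧ IsSquare t) := by
  have hpI : Prime (p : ℤ) := Nat.prime_iff_prime_int.mp hp.out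
  have hpT : ¬ (p:ℤ) ∣ (t.val : ℤ) := by
    rw [Int.natCast_dvd_natCast]
    intro hdvd
    have hlt : t.val < p := ZMod.val_lt t
    have : t.val ≠ 0 := fun h => ht (by rwa [← ZMod.val_eq_zero])
    have := Nat.le_of_dvd (Nat.pos_of_ne_zero this) hdvd
    omega
  constructor
  · rintro ⟨x, hx⟩
    have hdvd : ((p:ℤ))^(k+1) ∣ (x.val : ℤ)*(x.val : ℤ) - (t.val : ℤ)*(p:ℤ)^k := by
      have h0 : (((x.val:ℤ)*(x.val:ℤ) - (t.val:ℤ)*(p:ℤ)^k : ℤ) : ZMod (p^(k+1))) = 0 := by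
        push_cast
        rw [ZMod.natCast_val, ZMod.cast_id, ← hx]
        push_cast
        ring
      have h1 := (ZMod.intCast_zmod_eq_zero_iff_dvd _ (p^(k+1))).mp h0
      exact_mod_cast h1
    by_cases hX : x.val = 0
    · exfalso
      rw [hX] at hdvd
      push_cast at hdvd
      have h0 : ((p:ℤ))^(k+1) ∣ (t.val : ℤ)*(p:ℤ)^k := by
        simpa using dvd_neg.mpr hdvd
      have h1 : ((p:ℤ))^k*(p:ℤ) ∣ ((p:ℤ))^k * (t.val:ℤ) := by
        rw [← pow_succ]
        rwa [mul_comm ((p:ℤ)^k) (t.val:ℤ)]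
      exact hpT ((mul_dvd_mul_iff_left (pow_ne_zero k (Int.natCast_ne_zero.mpr hp.out.ne_zero))).mp h1)
    · set j := (x.val).factorization p with hj
      set s := x.val / p ^ j with hs
      have hXeq : p ^ j * s = x.val := Nat.ordProj_mul_ordCompl_eq_self x.val p
      have hps : ¬ p ∣ s := Nat.not_dvd_ordCompl hp.out hX
      have hdvd2 : ((p:ℤ))^(k+1) ∣ ((p:ℤ)^j*(s:ℤ))*((p:ℤ)^j*(s:ℤ)) - (t.val : ℤ)*(p:ℤ)^k := by
        have : ((p:ℤ)^j*(s:ℤ)) = (x.val : ℤ) := by exact_mod_cast congrArg (Nat.cast : ℕ → ℤ) hXeq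
        rw [this]; exact hdvd
      rcases lt_trichotomy (2*j) k with h | h | h
      · exfalso
        have h1 : ((p:ℤ))^(2*j+1) ∣ (t.val : ℤ)*(p:ℤ)^k :=
          Dvd.dvd.mul_left (pow_dvd_pow _ (by omega)) _
        have h2 : ((p:ℤ))^(2*j+1) ∣ ((p:ℤ)^j*(s:ℤ))*((p:ℤ)^j*(s:ℤ)) := by
          have := dvd_add (dvd_trans (pow_dvd_pow _ (by omega : 2*j+1 ≤ k+1)) hdvd2) h1
          simpa using this
        have h3 : ((p:ℤ))^(2*j)*(p:ℤ) ∣ ((p:ℤ)^(2*j))*((s:ℤ)*(s:ℤ)) := by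
          rw [← pow_succ]
          convert h2 using 1
          ring
        have h4 : (p:ℤ) ∣ (s:ℤ)*(s:ℤ) :=
          (mul_dvd_mul_iff_left (pow_ne_zero (2*j) (Int.natCast_ne_zero.mpr hp.out.ne_zero))).mp h3
        rcases hpI.dvd_mul.mp h4 with h | h <;>
          exact hps (Int.natCast_dvd_natCast.mp h)
      · refine ⟨⟨j, by omega⟩, ?_⟩
        have h1 : ((p:ℤ))^k*(p:ℤ) ∣ ((p:ℤ))^k * ((s:ℤ)*(s:ℤ) - (t.val:ℤ)) := by
          rw [← pow_succ]
          convert hdvd2 using 1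
          rw [← h]
          ring
        have h2 : (p:ℤ) ∣ (s:ℤ)*(s:ℤ) - (t.val:ℤ) :=
          (mul_dvd_mul_iff_left (pow_ne_zero k (Int.natCast_ne_zero.mpr hp.out.ne_zero))).mp h1
        refine ⟨(s : ZMod p), ?_⟩
        have : (((s:ℤ)*(s:ℤ) - (t.val:ℤ) : ℤ) : ZMod p) = 0 := by
          rw [ZMod.intCast_zmod_eq_zero_iff_dvd]; exact h2
        push_cast at this
        rw [ZMod.natCast_val, ZMod.cast_id] at this
        linear_combination -this
      · exfalso
        have h1 : ((p:ℤ))^(k+1) ∣ ((p:ℤ)^j*(s:ℤ))*((p:ℤ)^j*(s:ℤ)) := by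
          have : ((p:ℤ))^(k+1) ∣ ((p:ℤ))^(2*j) * ((s:ℤ)*(s:ℤ)) :=
            Dvd.dvd.mul_right (pow_dvd_pow _ (by omega)) _
          convert this using 1; ring
        have h2 : ((p:ℤ))^k*(p:ℤ) ∣ ((p:ℤ))^k * (t.val:ℤ) := by
          rw [← pow_succ]
          have := dvd_sub h1 hdvd2
          simpa [mul_comm] using this
        have h3 : (p:ℤ) ∣ (t.val:ℤ) :=
          (mul_dvd_mul_iff_left (pow_ne_zero k (Int.natCast_ne_zero.mpr hp.out.ne_zero))).mp h2
        exact hpT h3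
  · rintro ⟨⟨j, hjk⟩, s, hst⟩
    refine ⟨((s.val * p^j : ℕ) : ZMod (p^(k+1))), ?_⟩
    have hdvd : ((p:ℤ))^(k+1) ∣ ((s.val:ℤ)*(p:ℤ)^j)*((s.val:ℤ)*(p:ℤ)^j) - (t.val : ℤ)*(p:ℤ)^k := by
      have hkey : (p:ℤ) ∣ (s.val:ℤ)*(s.val:ℤ) - (t.val:ℤ) := by
        rw [← ZMod.intCast_zmod_eq_zero_iff_dvd]
        push_cast
        rw [ZMod.natCast_val, ZMod.natCast_val, ZMod.cast_id, ZMod.cast_id, hst]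
        ring
      have : ((s.val:ℤ)*(p:ℤ)^j)*((s.val:ℤ)*(p:ℤ)^j) - (t.val : ℤ)*(p:ℤ)^k
          = (p:ℤ)^k * ((s.val:ℤ)*(s.val:ℤ) - (t.val:ℤ)) := by
        rw [show k = j + j from by omega]
        ring
      rw [this, pow_succ]
      exact mul_dvd_mul_left _ hkey
    have : (((((s.val:ℤ)*(p:ℤ)^j)*((s.val:ℤ)*(p:ℤ)^j) - (t.val : ℤ)*(p:ℤ)^k) : ℤ) : ZMod (p^(k+1))) = 0 := by
      rw [ZMod.intCast_zmod_eq_zero_iff_dvd]; exact_mod_cast hdvd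
    push_cast at this
    push_cast
    linear_combination -this


theorem stmt_11 (p : ℕ) [Fact p.Prime] (hodd : p ≠ 2) (n : ℤ)
    (hn : Int.gcd n p = 1) (k : ℕ) (hk : 1 ≤ k)
    (a : ZMod (p ^ k)) (ha : IsTarget n (p ^ k) a 0) :
    (Even k →
      ({q : ZMod (p ^ (k + 1)) × ZMod (p ^ (k + 1)) |
          IsTarget n (p ^ (k + 1)) q.1 q.2 ∧
          ZMod.castHom (pow_dvd_pow p k.le_succ) (ZMod (p ^ k)) q.1 = a ∧
          ZMod.castHom (pow_dvd_pow p k.le_succ) (ZMod (p ^ k)) q.2 = 0}).ncard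
        = (p + 1) / 2) ∧
    (Odd k →
      ({q : ZMod (p ^ (k + 1)) × ZMod (p ^ (k + 1)) |
          IsTarget n (p ^ (k + 1)) q.1 q.2 ∧
          ZMod.castHom (pow_dvd_pow p k.le_succ) (ZMod (p ^ k)) q.1 = a ∧
          ZMod.castHom (pow_dvd_pow p k.le_succ) (ZMod (p ^ k)) q.2 = 0}).ncard
        = 1) := by
  have hp : Fact p.Prime := inferInstance
  have hk0 : k ≠ 0 := by omega
  have hppos : 0 < p := hp.out.pos
  have hpk : (0:ℕ) < p^k := pow_pos hppos k
  set castK := ZMod.castHom (pow_dvd_pow p k.le_succ) (ZMod (p ^ k)) with hcastK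
  set ψ := ZMod.castHom (dvd_pow_self p (Nat.succ_ne_zero k)) (ZMod p) with hψ
  set φ := ZMod.castHom (dvd_pow_self p hk0) (ZMod p) with hφ
  set ι : ZMod p → ZMod (p^(k+1)) := fun t => ((t.val * p^k : ℕ) : ZMod (p^(k+1))) with hι
  -- basic facts
  have hF5 : a = -(n : ZMod (p^k)) := by
    have := ha.2.2; linear_combination this
  have hF6 : IsSquare (-(n : ZMod p)) := by
    have h := ha.1.map φ
    rwa [hF5, map_neg, map_intCast] at h
  have hnu : ((n : ZMod p)) ≠ 0 := by
    rw [Ne, ZMod.intCast_zmod_eq_zero_iff_dvd]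
    intro hdvd
    have h2 : (p:ℤ) ∣ (Int.gcd n p : ℤ) := Int.dvd_coe_gcd hdvd dvd_rfl
    rw [hn] at h2
    have h3 := Int.le_of_dvd one_pos h2
    have h4 := hp.out.two_le
    omega
  -- ι properties
  have hιval : ∀ t : ZMod p, (ι t).val = t.val * p^k := by
    intro t
    apply ZMod.val_cast_of_lt
    have h1 : t.val < p := ZMod.val_lt t
    calc t.val * p^k < p * p^k := by
          exact (Nat.mul_lt_mul_right hpk).mpr h1
      _ = p^(k+1) := by ring
  have hιinj : Function.Injective ι := by
    intro t t' h
    have := congrArg ZMod.val h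
    rw [hιval, hιval] at this
    have : t.val = t'.val := Nat.eq_of_mul_eq_mul_right hpk this
    exact ZMod.val_injective _ this
  have hι0 : ι 0 = 0 := by
    simp [hι, ZMod.val_zero]
  have hF1 : ∀ t : ZMod p, castK (ι t) = 0 := by
    intro t
    rw [hι]
    simp only [map_natCast]
    rw [Nat.cast_mul, ZMod.natCast_self, mul_zero]
  have hF4 : ∀ t : ZMod p, ψ (ι t) = 0 := by
    intro t
    rw [hι]
    simp only [map_natCast]
    rw [Nat.cast_mul, Nat.cast_pow, ZMod.natCast_self, zero_pow hk0, mul_zero]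
  have hF2 : ∀ b : ZMod (p^(k+1)), castK b = 0 → ∃ t : ZMod p, b = ι t := by
    intro b hb
    have hb' : (b.val : ZMod (p^k)) = 0 := by
      rw [← hb, hcastK, ZMod.castHom_apply, ← ZMod.natCast_val]
    rw [ZMod.natCast_eq_zero_iff] at hb'
    obtain ⟨c, hc⟩ := hb'
    have hblt : b.val < p^(k+1) := ZMod.val_lt b
    have hclt : c < p := by
      have h2 : p^k * c < p^k * p := by
        have h3 := hblt
        rw [hc, pow_succ] at h3
        exact h3
      exact Nat.lt_of_mul_lt_mul_left h2
    refine ⟨(c : ZMod p), ?_⟩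
    have hval : ((c : ZMod p)).val = c := ZMod.val_cast_of_lt hclt
    rw [hι]
    simp only [hval]
    rw [mul_comm c (p^k), ← hc]
    rw [ZMod.natCast_val, ZMod.cast_id]
  have hF8 : ∀ t : ZMod p, IsSquare (ι t - (n : ZMod (p^(k+1)))) := by
    intro t
    have hcast : ψ (ι t - (n : ZMod (p^(k+1)))) = -(n : ZMod p) := by
      rw [map_sub, hF4, map_intCast]; ring
    have hunit : IsUnit (ι t - (n : ZMod (p^(k+1)))) := by
      set u := ι t - (n : ZMod (p^(k+1))) with hu
      have h1 : (u.val : ZMod p) ≠ 0 := by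
        have : ψ u = (u.val : ZMod p) := by
          rw [hψ, ZMod.castHom_apply, ← ZMod.natCast_val]
        rw [← this, hcast]
        simpa using hnu
      rw [Ne, ZMod.natCast_eq_zero_iff] at h1
      have hcop : Nat.Coprime u.val (p^(k+1)) :=
        Nat.Coprime.pow_right _ ((Nat.Prime.coprime_iff_not_dvd hp.out).mpr h1).symm
      have := (ZMod.isUnit_iff_coprime u.val (p^(k+1))).mpr hcop
      rwa [ZMod.natCast_val, ZMod.cast_id] at this
    rw [isSquare_unit_iff p hodd k _ hunit]
    rw [hψ] at hcast
    rw [hcast]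
    exact hF6
  -- set equality
  set S := {q : ZMod (p ^ (k + 1)) × ZMod (p ^ (k + 1)) |
          IsTarget n (p ^ (k + 1)) q.1 q.2 ∧ castK q.1 = a ∧ castK q.2 = 0} with hS
  set T := {t : ZMod p | IsSquare (ι t)} with hT
  have hcastKn : castK ((n : ZMod (p^(k+1)))) = (n : ZMod (p^k)) := map_intCast _ _
  have hSeq : S = (fun t => (ι t - (n : ZMod (p^(k+1))), ι t)) '' T := by
    ext q
    constructor
    · rintro ⟨⟨hsq1, hsq2, heq⟩, hc1, hc2⟩
      obtain ⟨t, ht⟩ := hF2 q.2 hc2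
      refine ⟨t, ?_, ?_⟩
      · rw [hT, Set.mem_setOf_eq, ← ht]; exact hsq2
      · have hq1 : q.1 = ι t - (n : ZMod (p^(k+1))) := by
          rw [← ht]; linear_combination heq
        exact Prod.ext hq1.symm ht.symm
    · rintro ⟨t, htT, rfl⟩
      simp only [hS, Set.mem_setOf_eq]
      refine ⟨⟨hF8 t, htT, by ring⟩, ?_, hF1 t⟩
      rw [map_sub, hF1, hcastKn, hF5]
      ring
  have hinj2 : Function.Injective (fun t : ZMod p => (ι t - (n : ZMod (p^(k+1))), ι t)) := by
    intro t t' h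
    exact hιinj (congrArg Prod.snd h)
  have hncard : S.ncard = T.ncard := by
    rw [hSeq, Set.ncard_image_of_injective _ hinj2]
  constructor
  · intro hEven
    rw [hncard]
    have : T = {t : ZMod p | IsSquare t} := by
      ext t
      by_cases ht : t = 0
      · subst ht
        simp only [hT, Set.mem_setOf_eq, hι0]
        simp
      · simp only [hT, Set.mem_setOf_eq]
        rw [show (ι t) = ((↑(t.val * p^k) : ZMod (p^(k+1)))) from rfl]
        rw [isSquare_val_mul_pow_iff p k t ht]
        simp [hEven]
    rw [this]
    exact card_squares p hodd
  · intro hOdd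
    rw [hncard]
    have : T = {0} := by
      ext t
      by_cases ht : t = 0
      · subst ht
        simp only [hT, Set.mem_setOf_eq, hι0]
        simp
      · simp only [hT, Set.mem_setOf_eq, Set.mem_singleton_iff]
        rw [show (ι t) = ((↑(t.val * p^k) : ZMod (p^(k+1)))) from rfl]
        rw [isSquare_val_mul_pow_iff p k t ht]
        simp [ht, Nat.not_even_iff_odd.mpr hOdd]
    rw [this]
    exact Set.ncard_singleton 0
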